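/- For any real δ, ∫_0^∞ P_edge(σ, δ) dσ = (1/(2√(2π))) · [1 − erf(δ√2) + (1/√2) e^{-δ²} (1 + erf(δ))], where P_edge(σ, δ) = (1/(2√(2π)σ²)) e^{-1/(4σ²) + δ/σ} · [(1/√(2π)) e^{-2δ²} + (1/σ − 2δ)·(1/√(2π)) ∫_{2δ}^∞ e^{-v²/2} dv]. -/

import Mathlib

open MeasureTheory Real Filter Set

noncomputable def erf (x : ℝ) : ℝ := (2 / Real.sqrt π) * ∫ u in (0 : ℝ)..x, Real.exp (-u ^ 2)

noncomputable def Pedge (σ δ : ℝ) : ℝ :=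
  (1 / (2 * Real.sqrt (2 * π) * σ ^ 2)) * Real.exp (-1 / (4 * σ ^ 2) + δ / σ) *
    ((1 / Real.sqrt (2 * π)) * Real.exp (-2 * δ ^ 2) +
      (1 / σ - 2 * δ) * (1 / Real.sqrt (2 * π)) * ∫ v in Set.Ioi (2 * δ), Real.exp (-v ^ 2 / 2))

lemma gauss_int : Integrable (fun u : ℝ => Real.exp (-u ^ 2)) := by
  simpa using integrable_exp_neg_mul_sq (b := 1) one_pos

lemma split_Ioi {g : ℝ → ℝ} (hg : Integrable g) (a b : ℝ) :
    ∫ x in Ioi a, g x = (∫ x in a..b, g x) + ∫ x in Ioi b, g x := by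
  rcases le_total a b with h | h
  · rw [intervalIntegral.integral_of_le h, ← setIntegral_union (Ioc_disjoint_Ioi le_rfl)
      measurableSet_Ioi hg.integrableOn hg.integrableOn, Ioc_union_Ioi_eq_Ioi h]
  · have := setIntegral_union (Ioc_disjoint_Ioi (le_refl a)) measurableSet_Ioi
      (hg.integrableOn (s := Ioc b a)) (hg.integrableOn (s := Ioi a))
    rw [Ioc_union_Ioi_eq_Ioi h] at this
    rw [intervalIntegral.integral_symm, intervalIntegral.integral_of_le h, this]
    ring

lemma gauss_Ioi_zero : ∫ u in Ioi (0:ℝ), Real.exp (-u ^ 2) = Real.sqrt π / 2 := by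
  simpa using integral_gaussian_Ioi 1

lemma erf_eq (x : ℝ) : ∫ u in (0:ℝ)..x, Real.exp (-u ^ 2) = Real.sqrt π / 2 * erf x := by
  have h : Real.sqrt π ≠ 0 := by positivity
  rw [erf]; field_simp

lemma affine_subst (g : ℝ → ℝ) (a c d : ℝ) (hc : 0 < c) :
    ∫ y in Ioi (c * a + d), g y = ∫ x in Ioi a, c * g (c * x + d) := by
  have h1 : ∀ x ∈ Ioi a, HasDerivWithinAt (fun t : ℝ => c * t + d) c (Ioi a) x := fun x _ => by
    simpa using (((hasDerivAt_id x).const_mul c).add_const d).hasDerivWithinAt (s := Ioi a)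
  have h2 : InjOn (fun t : ℝ => c * t + d) (Ioi a) := fun x _ y _ h => by
    simp only at h
    have : c * x = c * y := by linarith
    exact mul_left_cancel₀ hc.ne' this
  have h3 : (fun t : ℝ => c * t + d) '' Ioi a = Ioi (c * a + d) := by
    ext y; simp only [mem_image, mem_Ioi]
    constructor
    · rintro ⟨x, hx, rfl⟩; nlinarith
    · intro hy; exact ⟨(y - d) / c, by rw [lt_div_iff₀ hc]; nlinarith, by field_simp; ring⟩
  rw [← h3, integral_image_eq_integral_abs_deriv_smul measurableSet_Ioi h1 h2 g]
  simp [abs_of_pos hc]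

lemma gauss_Ioi (a : ℝ) :
    ∫ u in Ioi a, Real.exp (-u ^ 2) = Real.sqrt π / 2 - Real.sqrt π / 2 * erf a := by
  have h := split_Ioi gauss_int 0 a
  rw [gauss_Ioi_zero, erf_eq] at h
  linarith

lemma int_exp (δ : ℝ) : Integrable (fun t : ℝ => Real.exp (-t ^ 2 / 4 + δ * t)) := by
  have h := ((integrable_exp_neg_mul_sq (b := 1/4) (by norm_num)).comp_add_right
    (-(2 * δ))).const_mul (Real.exp (δ ^ 2))
  refine h.congr (Filter.Eventually.of_forall fun x => ?_)
  dsimp only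
  rw [← Real.exp_add]
  congr 1; ring

lemma int_poly (δ : ℝ) :
    Integrable (fun t : ℝ => (t - 2 * δ) * Real.exp (-t ^ 2 / 4 + δ * t)) := by
  have h := ((integrable_mul_exp_neg_mul_sq (b := 1/4) (by norm_num)).comp_add_right
    (-(2 * δ))).const_mul (Real.exp (δ ^ 2))
  refine h.congr (Filter.Eventually.of_forall fun x => ?_)
  dsimp only
  have h2 : Real.exp (δ ^ 2) * Real.exp (-(1/4) * (x + -(2 * δ)) ^ 2)
      = Real.exp (-x ^ 2 / 4 + δ * x) := by rw [← Real.exp_add]; congr 1; ring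
  calc Real.exp (δ ^ 2) * ((x + -(2 * δ)) * Real.exp (-(1/4) * (x + -(2 * δ)) ^ 2))
      = (x - 2 * δ) * (Real.exp (δ ^ 2) * Real.exp (-(1/4) * (x + -(2 * δ)) ^ 2)) := by ring
    _ = (x - 2 * δ) * Real.exp (-x ^ 2 / 4 + δ * x) := by rw [h2]

lemma integralA (δ : ℝ) : ∫ t in Ioi (0:ℝ), Real.exp (-t ^ 2 / 4 + δ * t)
    = Real.sqrt π * Real.exp (δ ^ 2) * (1 + erf δ) := by
  have hneg : ∫ u in (-δ)..(0:ℝ), Real.exp (-u ^ 2) = ∫ u in (0:ℝ)..δ, Real.exp (-u ^ 2) := by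
    have h := intervalIntegral.integral_comp_neg (a := (0:ℝ)) (b := δ)
      (f := fun u => Real.exp (-u ^ 2))
    simp only [neg_neg, neg_zero, neg_sq] at h ⊢
    exact h.symm
  have hIoi : ∫ u in Ioi (-δ), Real.exp (-u ^ 2)
      = Real.sqrt π / 2 * erf δ + Real.sqrt π / 2 := by
    rw [split_Ioi gauss_int (-δ) 0, hneg, erf_eq, gauss_Ioi_zero]
  have hsub := affine_subst (fun u => Real.exp (-u ^ 2)) 0 (1/2) (-δ) (by norm_num)
  simp only [mul_zero, zero_add] at hsub
  calc ∫ t in Ioi (0:ℝ), Real.exp (-t ^ 2 / 4 + δ * t)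
      = ∫ t in Ioi (0:ℝ), (2 * Real.exp (δ ^ 2)) * (1/2 * Real.exp (-(1/2 * t + -δ) ^ 2)) := by
        refine setIntegral_congr_fun measurableSet_Ioi fun t _ => ?_
        rw [show (2 * Real.exp (δ ^ 2)) * (1/2 * Real.exp (-(1/2 * t + -δ) ^ 2))
            = Real.exp (δ ^ 2) * Real.exp (-(1/2 * t + -δ) ^ 2) from by ring, ← Real.exp_add]
        congr 1; ring
    _ = (2 * Real.exp (δ ^ 2)) * ∫ t in Ioi (0:ℝ), 1/2 * Real.exp (-(1/2 * t + -δ) ^ 2) :=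
        integral_const_mul _ _
    _ = (2 * Real.exp (δ ^ 2)) * ∫ u in Ioi (-δ), Real.exp (-u ^ 2) := by rw [hsub]
    _ = Real.sqrt π * Real.exp (δ ^ 2) * (1 + erf δ) := by rw [hIoi]; ring

lemma integralC (δ : ℝ) : ∫ v in Ioi (2 * δ), Real.exp (-v ^ 2 / 2)
    = Real.sqrt 2 * (Real.sqrt π / 2) * (1 - erf (δ * Real.sqrt 2)) := by
  have hsub := affine_subst (fun v => Real.exp (-v ^ 2 / 2)) (δ * Real.sqrt 2) (Real.sqrt 2) 0
    (by positivity)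
  have h2 : Real.sqrt 2 * (δ * Real.sqrt 2) + 0 = 2 * δ := by
    rw [add_zero, show Real.sqrt 2 * (δ * Real.sqrt 2) = Real.sqrt 2 * Real.sqrt 2 * δ from by
      ring, Real.mul_self_sqrt (by norm_num)]
  rw [h2] at hsub
  rw [hsub]
  have : ∀ x : ℝ, Real.sqrt 2 * Real.exp (-(Real.sqrt 2 * x + 0) ^ 2 / 2)
      = Real.sqrt 2 * Real.exp (-x ^ 2) := by
    intro x
    congr 1
    rw [add_zero, mul_pow, Real.sq_sqrt (by norm_num : (2:ℝ) ≥ 0)]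
    ring_nf
  rw [setIntegral_congr_fun measurableSet_Ioi fun x _ => this x, integral_const_mul,
    gauss_Ioi]
  ring

lemma tendstoB (δ : ℝ) :
    Tendsto (fun t : ℝ => -2 * Real.exp (-t ^ 2 / 4 + δ * t)) atTop (nhds 0) := by
  have h2 : Tendsto (fun t : ℝ => t / 2 + -δ) atTop atTop :=
    tendsto_atTop_add_const_right _ (-δ) (tendsto_id.atTop_div_const two_pos)
  have h3 : Tendsto (fun t : ℝ => (t / 2 + -δ) * (t / 2 + -δ)) atTop atTop :=
    h2.atTop_mul_atTop₀ h2
  have h4 : Tendsto (fun t : ℝ => δ ^ 2 + -((t / 2 + -δ) * (t / 2 + -δ))) atTop atBot :=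
    tendsto_atBot_add_const_left _ _ (tendsto_neg_atTop_atBot.comp h3)
  have h1 : Tendsto (fun t : ℝ => -t ^ 2 / 4 + δ * t) atTop atBot := by
    refine h4.congr fun t => by ring
  have h5 : Tendsto (fun t : ℝ => Real.exp (-t ^ 2 / 4 + δ * t)) atTop (nhds 0) :=
    Real.tendsto_exp_atBot.comp h1
  have := h5.const_mul (-2)
  simpa using this

lemma integralB (δ : ℝ) :
    ∫ t in Ioi (0:ℝ), (t - 2 * δ) * Real.exp (-t ^ 2 / 4 + δ * t) = 2 := by
  have hderiv : ∀ t ∈ Ioi (0:ℝ), HasDerivAt (fun t : ℝ => -2 * Real.exp (-t ^ 2 / 4 + δ * t))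
      ((t - 2 * δ) * Real.exp (-t ^ 2 / 4 + δ * t)) t := by
    intro t _
    have hu : HasDerivAt (fun t : ℝ => -t ^ 2 / 4 + δ * t) (-(2 * t) / 4 + δ) t := by
      have := (((hasDerivAt_pow 2 t).neg.div_const 4).add ((hasDerivAt_id t).const_mul δ))
      exact this.congr_deriv (by norm_num)
    have := (hu.exp).const_mul (-2)
    exact this.congr_deriv (by ring)
  have hcont : ContinuousWithinAt (fun t : ℝ => -2 * Real.exp (-t ^ 2 / 4 + δ * t))
      (Ici (0:ℝ)) 0 := (Continuous.continuousWithinAt (by fun_prop))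
  have h := integral_Ioi_of_hasDerivAt_of_tendsto hcont hderiv ((int_poly δ).integrableOn)
    (tendstoB δ)
  rw [h]
  norm_num


theorem stmt10 (δ : ℝ) :
    (∫ σ in Set.Ioi (0 : ℝ), Pedge σ δ)
    = (1 / (2 * Real.sqrt (2 * π))) *
        (1 - erf (δ * Real.sqrt 2) + (1 / Real.sqrt 2) * Real.exp (-δ ^ 2) * (1 + erf δ)) := by
  have hS : Real.sqrt (2 * π) = Real.sqrt 2 * Real.sqrt π := Real.sqrt_mul (by norm_num) π
  have hπ : Real.sqrt π ≠ 0 := by positivity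
  have hs2 : Real.sqrt 2 ≠ 0 := by positivity
  have hSne : Real.sqrt (2 * π) ≠ 0 := by positivity
  obtain ⟨I, hI⟩ : ∃ I, (∫ v in Ioi (2 * δ), Real.exp (-v ^ 2 / 2)) = I := ⟨_, rfl⟩
  have hIval : I = Real.sqrt 2 * (Real.sqrt π / 2) * (1 - erf (δ * Real.sqrt 2)) := by
    rw [← hI]; exact integralC δ
  have hsub := integral_comp_rpow_Ioi (fun t =>
    (1 / (2 * Real.sqrt (2 * π))) * Real.exp (-t ^ 2 / 4 + δ * t) *
      ((1 / Real.sqrt (2 * π)) * Real.exp (-2 * δ ^ 2) +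
        (t - 2 * δ) * ((1 / Real.sqrt (2 * π)) * I)))
    (p := -1) (by norm_num)
  have step1 : (∫ σ in Set.Ioi (0 : ℝ), Pedge σ δ)
      = ∫ t in Ioi (0:ℝ), (1 / (2 * Real.sqrt (2 * π))) * Real.exp (-t ^ 2 / 4 + δ * t) *
          ((1 / Real.sqrt (2 * π)) * Real.exp (-2 * δ ^ 2) +
            (t - 2 * δ) * ((1 / Real.sqrt (2 * π)) * I)) := by
    rw [← hsub]
    refine setIntegral_congr_fun measurableSet_Ioi fun x hx => ?_
    have hx0 : (0:ℝ) < x := hx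
    have hrp1 : x ^ ((-1:ℝ)) = x⁻¹ := by
      rw [Real.rpow_neg hx0.le, Real.rpow_one]
    have hrp2 : x ^ ((-1:ℝ) - 1) = (x ^ 2)⁻¹ := by
      rw [show ((-1:ℝ) - 1) = -(2:ℕ) by norm_num, Real.rpow_neg hx0.le, Real.rpow_natCast]
    have he : -(x⁻¹) ^ 2 / 4 + δ * x⁻¹ = -1 / (4 * x ^ 2) + δ / x := by
      field_simp
    rw [Pedge, hI]
    simp only [hrp1, hrp2, smul_eq_mul, he, abs_neg, abs_one]
    field_simp [hx0.ne', hSne]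
  rw [step1]
  have hint1 : IntegrableOn (fun t : ℝ =>
      ((1 / (2 * Real.sqrt (2 * π))) * ((1 / Real.sqrt (2 * π)) * Real.exp (-2 * δ ^ 2))) *
        Real.exp (-t ^ 2 / 4 + δ * t)) (Ioi (0:ℝ)) :=
    ((int_exp δ).const_mul _).integrableOn
  have hint2 : IntegrableOn (fun t : ℝ =>
      ((1 / (2 * Real.sqrt (2 * π))) * ((1 / Real.sqrt (2 * π)) * I)) *
        ((t - 2 * δ) * Real.exp (-t ^ 2 / 4 + δ * t))) (Ioi (0:ℝ)) :=
    ((int_poly δ).const_mul _).integrableOn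
  rw [setIntegral_congr_fun measurableSet_Ioi (f := fun t =>
      (1 / (2 * Real.sqrt (2 * π))) * Real.exp (-t ^ 2 / 4 + δ * t) *
        ((1 / Real.sqrt (2 * π)) * Real.exp (-2 * δ ^ 2) +
          (t - 2 * δ) * ((1 / Real.sqrt (2 * π)) * I)))
    (g := fun t =>
      ((1 / (2 * Real.sqrt (2 * π))) * ((1 / Real.sqrt (2 * π)) * Real.exp (-2 * δ ^ 2))) *
        Real.exp (-t ^ 2 / 4 + δ * t) +
      ((1 / (2 * Real.sqrt (2 * π))) * ((1 / Real.sqrt (2 * π)) * I)) *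
        ((t - 2 * δ) * Real.exp (-t ^ 2 / 4 + δ * t))) (fun t _ => by ring),
    integral_add hint1 hint2, integral_const_mul, integral_const_mul, integralA, integralB,
    hIval]
  have hy : Real.exp (-2 * δ ^ 2) = Real.exp (-δ ^ 2) * Real.exp (-δ ^ 2) := by
    rw [← Real.exp_add]; congr 1; ring
  have hy2 : Real.exp (δ ^ 2) = (Real.exp (-δ ^ 2))⁻¹ := by
    rw [← Real.exp_neg]; congr 1; ring
  have h2 : Real.sqrt 2 * Real.sqrt 2 = 2 := Real.mul_self_sqrt (by norm_num)
  have hyne : Real.exp (-δ ^ 2) ≠ 0 := (Real.exp_pos _).ne'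
  rw [hy, hy2, hS]
  field_simp
  ring_nf
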